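/- Let p₀ and p be choice models such that for every s ∈ 𝕊 with π_S(s) > 0 and every a ∈ s ∪ {0} with p₀(a|s) > 0 one has p(a|s) > 0 and log(p₀(a|s)/p(a|s)) ≤ τ, where τ > 0. Writing f(s,a) = log(p₀(a|s)/p(a|s)), for every integer k ≥ 2 it holds that Σ_{s∈𝕊} π_S(s) Σ_{a∈s∪{0}} p₀(a|s) |f(s,a)|^k ≤ (k!/2) · 2^{k-2} · 8 κ(τ) · H²(p,p₀), where κ(τ) = 2(e^{τ/2} − 1 − τ/2)/(1 − e^{-τ/2})². In particular the case k = 2 gives Σ_s π_S(s) Σ_a p₀(a|s) f(s,a)² ≤ 8κ(τ) H²(p,p₀). -/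

import Mathlib

open Finset
open scoped Nat

lemma summ2 (x : ℝ) : Summable (fun n : ℕ => x ^ (n+2) / (Nat.factorial (n+2) : ℝ)) := by
  exact (summable_nat_add_iff 2).mpr (Real.summable_pow_div_factorial x)

lemma exp_tail (x : ℝ) : Real.exp x = 1 + x + ∑' n : ℕ, x ^ (n+2) / (Nat.factorial (n+2) : ℝ) := by
  have h0 : Real.exp x = ∑' n : ℕ, x ^ n / (n ! : ℝ) := by
    rw [Real.exp_eq_exp_ℝ, NormedSpace.exp_eq_tsum_div]
  have hs : Summable (fun n : ℕ => x ^ n / (n ! : ℝ)) := Real.summable_pow_div_factorial x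
  rw [h0, Summable.tsum_eq_zero_add hs, Summable.tsum_eq_zero_add ((summable_nat_add_iff 1).mpr hs)]
  simp [Nat.factorial]
  ring

lemma exp_sub_tsum (x : ℝ) :
    Real.exp x - 1 - x = ∑' n : ℕ, x ^ (n+2) / (Nat.factorial (n+2) : ℝ) := by
  rw [exp_tail x]; ring

lemma mono_aux {u t : ℝ} (hu : 0 ≤ u) (hut : u ≤ t) :
    t^2 * (Real.exp u - 1 - u) ≤ u^2 * (Real.exp t - 1 - t) := by
  rw [exp_sub_tsum, exp_sub_tsum, ← tsum_mul_left, ← tsum_mul_left]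
  refine Summable.tsum_le_tsum ?_ ((summ2 u).mul_left _) ((summ2 t).mul_left _)
  intro n
  have hfac : (0:ℝ) < (Nat.factorial (n+2) : ℝ) := by positivity
  rw [mul_div_assoc', mul_div_assoc']
  apply div_le_div_of_nonneg_right ?_ hfac.le
  have hpow : u^n ≤ t^n := pow_le_pow_left₀ hu hut n
  calc t^2 * u^(n+2) = (u^2*t^2) * u^n := by ring
    _ ≤ (u^2*t^2) * t^n := by
        apply mul_le_mul_of_nonneg_left hpow (by positivity)
    _ = u^2 * t^(n+2) := by ring

lemma lemA {v : ℝ} (hv : 0 ≤ v) :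
    Real.exp v - 1 - v ≤ (Real.exp v - 1)^2 / 2 := by
  have h4 : 4 * (Real.exp v - 1 - v) ≤ Real.exp (2*v) - 1 - 2*v := by
    rw [exp_sub_tsum, exp_sub_tsum, ← tsum_mul_left]
    refine Summable.tsum_le_tsum ?_ ((summ2 v).mul_left _) (summ2 (2*v))
    intro n
    have hfac : (0:ℝ) < (Nat.factorial (n+2) : ℝ) := by positivity
    rw [mul_div_assoc']
    apply div_le_div_of_nonneg_right ?_ hfac.le
    have h2 : (4:ℝ) ≤ 2^(n+2) := by
      calc (4:ℝ) = 2^2 := by norm_num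
      _ ≤ 2^(n+2) := by apply pow_le_pow_right₀ (by norm_num); omega
    calc 4 * v^(n+2) ≤ 2^(n+2) * v^(n+2) := by
          apply mul_le_mul_of_nonneg_right h2 (by positivity)
      _ = (2*v)^(n+2) := by rw [mul_pow]
  have hE : Real.exp (2*v) = (Real.exp v)^2 := by
    rw [← Real.exp_nat_mul]; norm_num [mul_comm]
  nlinarith [h4, hE]

lemma chord {u t : ℝ} (hu : 0 ≤ u) (hut : u ≤ t) (ht : 0 < t) :
    u * (1 - Real.exp (-t)) ≤ t * (1 - Real.exp (-u)) := by
  have h := convexOn_exp.2 (Set.mem_univ (-t)) (Set.mem_univ (0:ℝ))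
    (show (0:ℝ) ≤ u/t by positivity)
    (show (0:ℝ) ≤ 1 - u/t by rw [sub_nonneg]; exact div_le_one_of_le₀ hut ht.le)
    (show u/t + (1 - u/t) = 1 by ring)
  simp only [smul_eq_mul, mul_zero, add_zero, Real.exp_zero, mul_one] at h
  have hx : u/t * (-t) = -u := by field_simp
  rw [hx] at h
  have h2 := mul_le_mul_of_nonneg_left h ht.le
  have h3 : t * (u/t * Real.exp (-t) + (1 - u/t)) = u * Real.exp (-t) + t - u := by
    field_simp; ring
  rw [h3] at h2
  nlinarith [h2]


lemma quad {t : ℝ} (ht : 0 ≤ t) : 1 + t + t^2/2 ≤ Real.exp t := by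
  have h := Real.sum_le_exp_of_nonneg ht 3
  simp [Finset.sum_range_succ, Nat.factorial] at h
  linarith

lemma moment {x : ℝ} (hx : 0 ≤ x) {k : ℕ} (hk : 2 ≤ k) :
    x^k ≤ (Nat.factorial k : ℝ) * (Real.exp x - 1 - x) := by
  have h := Real.sum_le_exp_of_nonneg hx (k+1)
  have hsub : ({0, 1, k} : Finset ℕ) ⊆ Finset.range (k+1) := by
    intro i hi; simp at hi; rcases hi with h|h|h <;> simp [h] <;> omega
  have h2 : ∑ i ∈ ({0, 1, k} : Finset ℕ), x^i/(i ! : ℝ) ≤ ∑ i ∈ Finset.range (k+1), x^i/(i ! : ℝ) := by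
    apply Finset.sum_le_sum_of_subset_of_nonneg hsub
    intro i _ _; positivity
  have h3 : ∑ i ∈ ({0, 1, k} : Finset ℕ), x^i/(i ! : ℝ) = 1 + x + x^k/(k ! : ℝ) := by
    rw [Finset.sum_insert (by simp; omega), Finset.sum_insert (by simp; omega),
      Finset.sum_singleton]
    simp [Nat.factorial]
    ring
  have hfac : (0:ℝ) < (k ! : ℝ) := by positivity
  have h4 : x^k/(k ! : ℝ) ≤ Real.exp x - 1 - x := by
    rw [h3] at h2; linarith [h2.trans h]
  calc x^k = (x^k/(k ! : ℝ)) * (k ! : ℝ) := by field_simp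
    _ ≤ (Real.exp x - 1 - x) * (k ! : ℝ) := by
        apply mul_le_mul_of_nonneg_right h4 hfac.le
    _ = (k ! : ℝ) * (Real.exp x - 1 - x) := by ring

lemma keyB {u t : ℝ} (ht : 0 < t) (hut : u ≤ t) :
    (Real.exp |u| - 1 - |u|) * (1 - Real.exp (-t))^2 ≤
      (Real.exp t - 1 - t) * (1 - Real.exp (-u))^2 := by
  have hNum : 0 ≤ Real.exp t - 1 - t := by linarith [Real.add_one_le_exp t]
  rcases le_or_gt 0 u with hu | hu
  · rw [abs_of_nonneg hu]
    have h1 := mono_aux hu hut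
    have h2 := chord hu hut ht
    have hl : 0 ≤ u * (1 - Real.exp (-t)) := by
      apply mul_nonneg hu
      have h0 : Real.exp (-t) ≤ Real.exp 0 := Real.exp_le_exp.mpr (by linarith)
      rw [Real.exp_zero] at h0; linarith
    have h2sq : (u * (1 - Real.exp (-t)))^2 ≤ (t * (1 - Real.exp (-u)))^2 :=
      pow_le_pow_left₀ hl h2 2
    have ht2 : (0:ℝ) < t^2 := by positivity
    rw [← mul_le_mul_iff_right₀ ht2]
    calc t^2 * ((Real.exp u - 1 - u) * (1 - Real.exp (-t))^2)
        = (t^2 * (Real.exp u - 1 - u)) * (1 - Real.exp (-t))^2 := by ring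
      _ ≤ (u^2 * (Real.exp t - 1 - t)) * (1 - Real.exp (-t))^2 := by
          apply mul_le_mul_of_nonneg_right h1 (by positivity)
      _ = (Real.exp t - 1 - t) * (u * (1 - Real.exp (-t)))^2 := by ring
      _ ≤ (Real.exp t - 1 - t) * (t * (1 - Real.exp (-u)))^2 := by
          apply mul_le_mul_of_nonneg_left h2sq hNum
      _ = t^2 * ((Real.exp t - 1 - t) * (1 - Real.exp (-u))^2) := by ring
  · rw [abs_of_neg hu]
    have hA := lemA (v := -u) (by linarith)
    have hsqe : (Real.exp (-u) - 1)^2 = (1 - Real.exp (-u))^2 := by ring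
    have h3 : (1 - Real.exp (-t))^2 ≤ t^2 := by
      have e1 : 1 - Real.exp (-t) ≤ t := by linarith [Real.add_one_le_exp (-t)]
      have e2 : 0 ≤ 1 - Real.exp (-t) := by
        have h0 : Real.exp (-t) ≤ Real.exp 0 := Real.exp_le_exp.mpr (by linarith)
        rw [Real.exp_zero] at h0; linarith
      exact pow_le_pow_left₀ e2 e1 2
    have h4 : t^2 ≤ 2 * (Real.exp t - 1 - t) := by linarith [quad ht.le]
    calc (Real.exp (-u) - 1 - -u) * (1 - Real.exp (-t))^2
        ≤ ((1 - Real.exp (-u))^2/2) * (1 - Real.exp (-t))^2 := by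
          apply mul_le_mul_of_nonneg_right (by rw [← hsqe]; linarith) (by positivity)
      _ ≤ ((1 - Real.exp (-u))^2/2) * t^2 := by
          apply mul_le_mul_of_nonneg_left h3 (by positivity)
      _ ≤ ((1 - Real.exp (-u))^2/2) * (2 * (Real.exp t - 1 - t)) := by
          apply mul_le_mul_of_nonneg_left h4 (by positivity)
      _ = (Real.exp t - 1 - t) * (1 - Real.exp (-u))^2 := by ring

lemma key {u t : ℝ} (ht : 0 < t) (hut : u ≤ t) {k : ℕ} (hk : 2 ≤ k) :
    |u|^k * (1 - Real.exp (-t))^2 ≤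
      (Nat.factorial k : ℝ) * ((Real.exp t - 1 - t) * (1 - Real.exp (-u))^2) := by
  have h1 := moment (abs_nonneg u) hk
  have h2 := keyB ht hut
  calc |u|^k * (1 - Real.exp (-t))^2
      ≤ ((k ! : ℝ) * (Real.exp |u| - 1 - |u|)) * (1 - Real.exp (-t))^2 := by
        apply mul_le_mul_of_nonneg_right h1 (by positivity)
    _ = (k ! : ℝ) * ((Real.exp |u| - 1 - |u|) * (1 - Real.exp (-t))^2) := by ring
    _ ≤ (k ! : ℝ) * ((Real.exp t - 1 - t) * (1 - Real.exp (-u))^2) := by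
        apply mul_le_mul_of_nonneg_left h2 (by positivity)


lemma pointwise {τ : ℝ} (hτ : 0 < τ) {k : ℕ} (hk : 2 ≤ k) {q0 q : ℝ}
    (hq0 : 0 ≤ q0) (hq : 0 ≤ q)
    (h : 0 < q0 → 0 < q ∧ Real.log (q0 / q) ≤ τ) :
    q0 * |Real.log (q0 / q)| ^ k ≤
      (Nat.factorial k : ℝ) * 2 ^ (k - 1) *
        (2 * (Real.exp (τ/2) - 1 - τ/2) / (1 - Real.exp (-(τ/2))) ^ 2) *
        (Real.sqrt q - Real.sqrt q0) ^ 2 := by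
  set t := τ/2 with htdef
  have ht : 0 < t := by positivity
  have hNum : 0 ≤ Real.exp t - 1 - t := by linarith [Real.add_one_le_exp t]
  have hden : 0 < (1 - Real.exp (-t))^2 := by
    have h0 : Real.exp (-t) < Real.exp 0 := Real.exp_lt_exp.mpr (by linarith)
    rw [Real.exp_zero] at h0
    have : 0 < 1 - Real.exp (-t) := by linarith
    positivity
  have hκ : 0 ≤ 2*(Real.exp t - 1 - t)/(1 - Real.exp (-t))^2 :=
    div_nonneg (by linarith) hden.le
  rcases eq_or_lt_of_le hq0 with h0 | h0
  · rw [← h0]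
    simp only [zero_mul]
    apply mul_nonneg (mul_nonneg (by positivity) hκ) (sq_nonneg _)
  · obtain ⟨hqpos, hlog⟩ := h h0
    set f := Real.log (q0/q) with hf
    set u := f/2 with hu
    have hut : u ≤ t := by rw [hu, htdef]; linarith
    have hexp : Real.exp f = q0 / q := Real.exp_log (div_pos h0 hqpos)
    have hq_eq : q = q0 * Real.exp (-f) := by
      rw [Real.exp_neg, hexp]
      field_simp
    have hsqrt : Real.sqrt q = Real.sqrt q0 * Real.exp (-u) := by
      rw [hq_eq, Real.sqrt_mul hq0]
      congr 1
      have h1 : Real.exp (-f) = (Real.exp (-u))^2 := by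
        rw [sq, ← Real.exp_add]
        congr 1
        rw [hu]; ring
      rw [h1, Real.sqrt_sq (Real.exp_nonneg _)]
    have hhell : (Real.sqrt q - Real.sqrt q0)^2 = q0 * (1 - Real.exp (-u))^2 := by
      rw [hsqrt]
      have hs : Real.sqrt q0 ^ 2 = q0 := Real.sq_sqrt hq0
      calc (Real.sqrt q0 * Real.exp (-u) - Real.sqrt q0)^2
          = Real.sqrt q0^2 * (1 - Real.exp (-u))^2 := by ring
        _ = q0 * (1 - Real.exp (-u))^2 := by rw [hs]
    have habs : |f|^k = 2^k * |u|^k := by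
      have h1 : f = 2*u := by rw [hu]; ring
      rw [h1, abs_mul, mul_pow, abs_two]
    have hkey' : |u|^k ≤ (k ! : ℝ) * ((Real.exp t - 1 - t)*(1 - Real.exp (-u))^2)
        / (1 - Real.exp (-t))^2 := by
      rw [le_div_iff₀ hden]; exact key ht hut hk
    rw [habs, hhell]
    have h2k : (2:ℝ)^(k-1) * 2 = 2^k := by
      rw [← pow_succ]
      congr 1
      omega
    have hDne : (1 - Real.exp (-t))^2 ≠ 0 := ne_of_gt hden
    calc q0 * (2^k * |u|^k)
        ≤ q0 * (2^k * ((k ! : ℝ) * ((Real.exp t - 1 - t)*(1 - Real.exp (-u))^2)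
            / (1 - Real.exp (-t))^2)) := by
          apply mul_le_mul_of_nonneg_left
            (mul_le_mul_of_nonneg_left hkey' (by positivity)) hq0
      _ = (k ! : ℝ) * 2^(k-1) * (2*(Real.exp t - 1 - t)/(1 - Real.exp (-t))^2)
            * (q0 * (1 - Real.exp (-u))^2) := by
          rw [← h2k]
          field_simp

/-- Squared Hellinger distance between two choice models at assortment `s`. -/
noncomputable def hsq (p₁ p₂ : Finset ℕ → ℕ → ℝ) (s : Finset ℕ) : ℝ :=
  (1 / 2) * ∑ a ∈ insert 0 s, (Real.sqrt (p₁ s a) - Real.sqrt (p₂ s a)) ^ 2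

/-- Generalized squared Hellinger distance. -/
noncomputable def Hsq (𝕊 : Finset (Finset ℕ)) (π : Finset ℕ → ℝ)
    (p₁ p₂ : Finset ℕ → ℕ → ℝ) : ℝ :=
  ∑ s ∈ 𝕊, π s * hsq p₁ p₂ s

/-- `p` is a choice model over the assortment family `𝕊`. -/
def IsChoiceModel (𝕊 : Finset (Finset ℕ)) (p : Finset ℕ → ℕ → ℝ) : Prop :=
  ∀ s ∈ 𝕊, (∀ a ∈ insert 0 s, 0 ≤ p s a) ∧ ∑ a ∈ insert 0 s, p s a = 1

/-- `𝕊` is a nonempty family of nonempty assortments of items `{1,…,N}`. -/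
def IsAssortmentFamily (N : ℕ) (𝕊 : Finset (Finset ℕ)) : Prop :=
  𝕊.Nonempty ∧ ∀ s ∈ 𝕊, s.Nonempty ∧ s ⊆ Finset.Icc 1 N

/-- `π` is a probability mass function on `𝕊`. -/
def IsPMF (𝕊 : Finset (Finset ℕ)) (π : Finset ℕ → ℝ) : Prop :=
  (∀ s, 0 ≤ π s) ∧ ∑ s ∈ 𝕊, π s = 1

theorem stmt9 (N : ℕ) (𝕊 : Finset (Finset ℕ)) (π : Finset ℕ → ℝ)
    (p₀ p : Finset ℕ → ℕ → ℝ) (τ : ℝ) (hτ : 0 < τ)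
    (hfam : IsAssortmentFamily N 𝕊) (hπ : IsPMF 𝕊 π)
    (hp₀ : IsChoiceModel 𝕊 p₀) (hp : IsChoiceModel 𝕊 p)
    (hdom : ∀ s ∈ 𝕊, 0 < π s → ∀ a ∈ insert 0 s, 0 < p₀ s a →
      0 < p s a ∧ Real.log (p₀ s a / p s a) ≤ τ) :
    (∀ k : ℕ, 2 ≤ k →
      ∑ s ∈ 𝕊, π s * ∑ a ∈ insert 0 s,
          p₀ s a * |Real.log (p₀ s a / p s a)| ^ k ≤
        ((Nat.factorial k : ℝ) / 2) * 2 ^ (k - 2) *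
          (8 * (2 * (Real.exp (τ / 2) - 1 - τ / 2) / (1 - Real.exp (-τ / 2)) ^ 2) *
            Hsq 𝕊 π p p₀)) ∧
    ∑ s ∈ 𝕊, π s * ∑ a ∈ insert 0 s,
        p₀ s a * (Real.log (p₀ s a / p s a)) ^ 2 ≤
      8 * (2 * (Real.exp (τ / 2) - 1 - τ / 2) / (1 - Real.exp (-τ / 2)) ^ 2) *
        Hsq 𝕊 π p p₀ := by
  set κ := 2 * (Real.exp (τ / 2) - 1 - τ / 2) / (1 - Real.exp (-τ / 2)) ^ 2 with hκdef
  have hmain : ∀ k : ℕ, 2 ≤ k →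
      ∑ s ∈ 𝕊, π s * ∑ a ∈ insert 0 s,
          p₀ s a * |Real.log (p₀ s a / p s a)| ^ k ≤
        ((Nat.factorial k : ℝ) / 2) * 2 ^ (k - 2) * (8 * κ * Hsq 𝕊 π p p₀) := by
    intro k hk
    set K := (Nat.factorial k : ℝ) * 2 ^ (k - 1) * κ with hKdef
    have e1 : (2:ℝ)^(k-2) * 4 = 2^k := by
      rw [show (4:ℝ) = 2^2 by norm_num, ← pow_add]
      congr 1
      omega
    have e2 : (2:ℝ)^(k-1) * 2 = 2^k := by
      rw [← pow_succ]
      congr 1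
      omega
    have hC : ((Nat.factorial k : ℝ) / 2) * 2 ^ (k - 2) * (8 * κ) = 2 * K := by
      calc ((Nat.factorial k : ℝ) / 2) * 2 ^ (k - 2) * (8 * κ)
          = (Nat.factorial k : ℝ) * (2^(k-2) * 4) * κ := by ring
        _ = (Nat.factorial k : ℝ) * 2^k * κ := by rw [e1]
        _ = (Nat.factorial k : ℝ) * (2^(k-1) * 2) * κ := by rw [e2]
        _ = 2 * K := by rw [hKdef]; ring
    have hrhs : ((Nat.factorial k : ℝ) / 2) * 2 ^ (k - 2) * (8 * κ * Hsq 𝕊 π p p₀)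
        = ∑ s ∈ 𝕊, π s * (2 * K * hsq p p₀ s) := by
      simp only [Hsq, Finset.mul_sum]
      refine Finset.sum_congr rfl fun s _ => ?_
      rw [show ((Nat.factorial k : ℝ) / 2) * 2 ^ (k - 2) * (8 * κ * (π s * hsq p p₀ s))
        = (((Nat.factorial k : ℝ) / 2) * 2 ^ (k - 2) * (8 * κ)) * (π s * hsq p p₀ s) by ring,
        hC]
      ring
    rw [hrhs]
    refine Finset.sum_le_sum fun s hs => ?_
    rcases eq_or_lt_of_le (hπ.1 s) with hπ0 | hπ0
    · rw [← hπ0]; simp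
    apply mul_le_mul_of_nonneg_left ?_ (hπ.1 s)
    have hinner : ∀ a ∈ insert 0 s, p₀ s a * |Real.log (p₀ s a / p s a)|^k
        ≤ K * (Real.sqrt (p s a) - Real.sqrt (p₀ s a))^2 := by
      intro a ha
      have hq0 := (hp₀ s hs).1 a ha
      have hq := (hp s hs).1 a ha
      have himp : 0 < p₀ s a → 0 < p s a ∧ Real.log (p₀ s a / p s a) ≤ τ :=
        fun h => hdom s hs hπ0 a ha h
      have hpt := pointwise hτ hk hq0 hq himp
      rw [← neg_div] at hpt
      rw [← hκdef] at hpt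
      rw [← hKdef] at hpt
      exact hpt
    calc ∑ a ∈ insert 0 s, p₀ s a * |Real.log (p₀ s a / p s a)|^k
        ≤ ∑ a ∈ insert 0 s, K * (Real.sqrt (p s a) - Real.sqrt (p₀ s a))^2 :=
          Finset.sum_le_sum hinner
      _ = 2 * K * hsq p p₀ s := by
          simp only [hsq, ← Finset.mul_sum]
          ring
  refine ⟨hmain, ?_⟩
  have h2 := hmain 2 le_rfl
  simp only [sq_abs] at h2
  norm_num [Nat.factorial] at h2
  exact h2
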